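/- Let P be a continuous L-ordered set. Then every Scott open set U satisfies U = ⋁_{x ∈ P} U(x) ∧ ⇑x; consequently {⇑x : x ∈ P} is a base for the Scott L-topology on P. -/
import Mathlib


open scoped Classical

namespace FuzzyPaper

variable {L : Type*} [Order.Frame L]

/-- The inclusion L-order on L-subsets: sub(A,B) = ⨅ x, A x ⇨ B x. -/
def subF {X : Type*} (A B : X → L) : L := ⨅ x, A x ⇨ B x

/-- `e` is an L-order: reflexivity, transitivity, antisymmetry. -/
def IsLOrder {P : Type*} (e : P → P → L) : Prop :=
  (∀ x, e x x = ⊤) ∧ (∀ x y z, e x y ⊓ e y z ≤ e x z) ∧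
  (∀ x y, e x y ⊓ e y x = ⊤ → x = y)

/-- `D` is a directed L-subset of `(P, e)`. -/
def IsDirectedL {P : Type*} (e : P → P → L) (D : P → L) : Prop :=
  (⨆ x, D x) = ⊤ ∧ ∀ x y, D x ⊓ D y ≤ ⨆ z, D z ⊓ e x z ⊓ e y z

/-- `x` is a supremum of the L-subset `A`: e(x,y) = sub(A, ↓y) for all y. -/
def IsSupOf {P : Type*} (e : P → P → L) (A : P → L) (x : P) : Prop :=
  ∀ y, e x y = ⨅ z, A z ⇨ e z y

/-- The fuzzy way-below L-subset ⇓x :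
⇓x(y) = ⨅_{D directed with a supremum s} (e(x,s) ⇨ ⨆ d, D d ⊓ e(y,d)). -/
def dwb {P : Type*} (e : P → P → L) (x : P) : P → L := fun y =>
  ⨅ Ds : {Ds : (P → L) × P // IsDirectedL e Ds.1 ∧ IsSupOf e Ds.1 Ds.2},
    e x Ds.1.2 ⇨ ⨆ d, Ds.1.1 d ⊓ e y d

/-- A continuous L-ordered set: ⇓x is directed with supremum x, for each x. -/
def IsContinuousLOrder {P : Type*} (e : P → P → L) : Prop :=
  IsLOrder e ∧ ∀ x, IsDirectedL e (dwb e x) ∧ IsSupOf e (dwb e x) x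

/-- An L-dcpo: every directed L-subset has a supremum. -/
def IsLDcpo {P : Type*} (e : P → P → L) : Prop :=
  IsLOrder e ∧ ∀ D, IsDirectedL e D → ∃ x, IsSupOf e D x

/-- A continuous L-dcpo. -/
def IsContinuousLDcpo {P : Type*} (e : P → P → L) : Prop :=
  IsLDcpo e ∧ ∀ x, IsDirectedL e (dwb e x) ∧ IsSupOf e (dwb e x) x

/-- Scott open L-subsets: upper sets inaccessible by directed suprema. -/
def IsScottOpen {P : Type*} (e : P → P → L) (A : P → L) : Prop :=
  (∀ x y, A x ⊓ e x y ≤ A y) ∧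
  ∀ D s, IsDirectedL e D → IsSupOf e D s → A s = ⨆ x, A x ⊓ D x

/-- The Scott L-topology. -/
def scottOpens {P : Type*} (e : P → P → L) : Set (P → L) := {A | IsScottOpen e A}

/-- `𝒪` is a (stratified) L-topology on X. -/
def IsLTop {X : Type*} (𝒪 : Set (X → L)) : Prop :=
  (∀ A ∈ 𝒪, ∀ B ∈ 𝒪, A ⊓ B ∈ 𝒪) ∧ (∀ S ⊆ 𝒪, sSup S ∈ 𝒪) ∧
  (∀ a : L, (fun _ => a) ∈ 𝒪)

/-- T₀ separation. -/
def IsT0 {X : Type*} (𝒪 : Set (X → L)) : Prop :=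
  ∀ x y : X, (∀ A ∈ 𝒪, A x = A y) → x = y

/-- The specialization L-order of an L-topological space. -/
def specE {X : Type*} (𝒪 : Set (X → L)) : X → X → L := fun x y =>
  ⨅ A : 𝒪, (A : X → L) x ⇨ (A : X → L) y

/-- A point of 𝒪(X): preserves binary meets, arbitrary joins and constants. -/
def IsPoint {X : Type*} (𝒪 : Set (X → L)) (p : 𝒪 → L) : Prop :=
  (∀ A B C : 𝒪, (C : X → L) = (A : X → L) ⊓ (B : X → L) → p C = p A ⊓ p B) ∧
  (∀ (S : Set 𝒪) (C : 𝒪), (C : X → L) = sSup (Subtype.val '' S) →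
    p C = ⨆ A ∈ S, p A) ∧
  (∀ (a : L) (C : 𝒪), (C : X → L) = (fun _ => a) → p C = a)

/-- The inclusion L-order on maps 𝒪 → L (in particular on points). -/
def subPt {X : Type*} (𝒪 : Set (X → L)) (p q : 𝒪 → L) : L := ⨅ A, p A ⇨ q A

/-- η : x ↦ [x], where [x](A) = A(x). -/
def etaPt {X : Type*} (𝒪 : Set (X → L)) (x : X) : 𝒪 → L := fun A => (A : X → L) x

/-- L-sobriety: η is a bijection onto the set of points. -/
def IsSober {X : Type*} (𝒪 : Set (X → L)) : Prop :=
  (∀ x y : X, etaPt 𝒪 x = etaPt 𝒪 y → x = y) ∧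
  (∀ p : 𝒪 → L, IsPoint 𝒪 p → ∃ x, p = etaPt 𝒪 x)

/-- Super-compact L-subsets. -/
def IsSuperCompact {X : Type*} (𝒪 : Set (X → L)) (A : X → L) : Prop :=
  (⨆ x, A x) = ⊤ ∧ ∀ S ⊆ 𝒪, subF A (sSup S) = ⨆ V ∈ S, subF A V

/-- Interior operator. -/
def interiorF {X : Type*} (𝒪 : Set (X → L)) (A : X → L) : X → L :=
  sSup {B ∈ 𝒪 | B ≤ A}

/-- Locally super-compact L-topological spaces. -/
def IsLocallySC {X : Type*} (𝒪 : Set (X → L)) : Prop :=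
  ∀ A ∈ 𝒪, A = fun x => ⨆ B ∈ {B | IsSuperCompact 𝒪 B}, subF B A ⊓ interiorF 𝒪 B x

/-- `ℬ` is a base of the L-topology `𝒪`. -/
def IsBase {X : Type*} (𝒪 : Set (X → L)) (ℬ : Set (X → L)) : Prop :=
  ℬ ⊆ 𝒪 ∧ ∀ A ∈ 𝒪, A = fun x => ⨆ B ∈ ℬ, subF B A ⊓ B x

/-- Strong locally super-compact: a base of super-compact open sets. -/
def IsStrongLocallySC {X : Type*} (𝒪 : Set (X → L)) : Prop :=
  ∃ ℬ, IsBase 𝒪 ℬ ∧ ∀ B ∈ ℬ, IsSuperCompact 𝒪 B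

/-- Continuity of maps of L-topological spaces. -/
def LCont {X Y : Type*} (𝒪X : Set (X → L)) (𝒪Y : Set (Y → L)) (f : X → Y) : Prop :=
  ∀ B ∈ 𝒪Y, (B ∘ f) ∈ 𝒪X

/-- k(x)(y) = e(y,x) if y is compact (⇓y(y) = ⊤), and ⊥ otherwise. -/
noncomputable def kfun {P : Type*} (e : P → P → L) (x : P) : P → L := fun y =>
  if dwb e y y = ⊤ then e y x else ⊥

/-- Algebraic L-dcpo. -/
def IsAlgebraicLDcpo {P : Type*} (e : P → P → L) : Prop :=
  IsLDcpo e ∧ ∀ x, IsDirectedL e (kfun e x) ∧ IsSupOf e (kfun e x) x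

/-- Quasihomeomorphism: f^← : 𝒪Y → 𝒪X is a bijection. -/
def IsQuasiHomeo {X Y : Type*} (𝒪X : Set (X → L)) (𝒪Y : Set (Y → L)) (f : X → Y) : Prop :=
  LCont 𝒪X 𝒪Y f ∧ (∀ A ∈ 𝒪X, ∃ B ∈ 𝒪Y, B ∘ f = A) ∧
  (∀ B₁ ∈ 𝒪Y, ∀ B₂ ∈ 𝒪Y, B₁ ∘ f = B₂ ∘ f → B₁ = B₂)

/-- Subspace embedding of L-topological spaces. -/
def IsEmbeddingL {X Y : Type*} (𝒪X : Set (X → L)) (𝒪Y : Set (Y → L)) (f : X → Y) : Prop :=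
  Function.Injective f ∧ 𝒪X = {A | ∃ B ∈ 𝒪Y, B ∘ f = A}

/-- Strict embedding: a quasihomeomorphism which is a subspace embedding. -/
def IsStrictEmbedding {X Y : Type*} (𝒪X : Set (X → L)) (𝒪Y : Set (Y → L)) (f : X → Y) : Prop :=
  IsEmbeddingL 𝒪X 𝒪Y f ∧ IsQuasiHomeo 𝒪X 𝒪Y f

/-- L-sobrification: universal L-sober space over X. -/
def IsSobrification {X Y : Type*} (𝒪X : Set (X → L)) (𝒪Y : Set (Y → L)) (j : X → Y) : Prop :=
  IsLTop 𝒪Y ∧ IsSober 𝒪Y ∧ LCont 𝒪X 𝒪Y j ∧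
  ∀ (Z : Type*) (𝒪Z : Set (Z → L)), IsLTop 𝒪Z → IsSober 𝒪Z →
    ∀ f : X → Z, LCont 𝒪X 𝒪Z f →
      ∃! g : Y → Z, LCont 𝒪Y 𝒪Z g ∧ f = g ∘ j



section Stmt8Aux

variable {P : Type*} {e : P → P → L}

lemma dwb_le_pair {x z : P} {D : P → L} {s : P} (hD : IsDirectedL e D)
    (hs : IsSupOf e D s) : dwb e x z ≤ e x s ⇨ ⨆ d, D d ⊓ e z d :=
  iInf_le (fun Ds : {Ds : (P → L) × P // IsDirectedL e Ds.1 ∧ IsSupOf e Ds.1 Ds.2} =>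
    e x Ds.1.2 ⇨ ⨆ d, Ds.1.1 d ⊓ e z d) ⟨(D, s), hD, hs⟩

lemma le_dwb {x z : P} {c : L}
    (h : ∀ (D : P → L) (s : P), IsDirectedL e D → IsSupOf e D s →
      c ≤ e x s ⇨ ⨆ d, D d ⊓ e z d) : c ≤ dwb e x z :=
  le_iInf fun Ds => h Ds.1.1 Ds.1.2 Ds.2.1 Ds.2.2

lemma mem_le_sup (hr : ∀ x, e x x = ⊤) {D : P → L} {s : P}
    (hs : IsSupOf e D s) (d : P) : D d ≤ e d s := by
  have h : D d ⇨ e d s = ⊤ := top_unique (by rw [← hr s, hs s]; exact iInf_le _ d)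
  exact himp_eq_top_iff.mp h

lemma down_directed (hr : ∀ x, e x x = ⊤) (x : P) :
    IsDirectedL e (fun t => e t x) := by
  constructor
  · exact top_unique (by rw [← hr x]; exact le_iSup (fun t => e t x) x)
  · intro a b
    refine le_trans ?_ (le_iSup _ x)
    simp [hr x]

lemma down_sup (hr : ∀ x, e x x = ⊤) (ht : ∀ x y z, e x y ⊓ e y z ≤ e x z) (x : P) :
    IsSupOf e (fun t => e t x) x := by
  intro y
  apply le_antisymm
  · exact le_iInf fun z => le_himp_iff.mpr (by rw [inf_comm]; exact ht z x y)
  · refine le_trans (iInf_le _ x) ?_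
    simp [hr x]

lemma dwb_le_e (hr : ∀ x, e x x = ⊤) (ht : ∀ x y z, e x y ⊓ e y z ≤ e x z)
    (x z : P) : dwb e x z ≤ e z x := by
  refine le_trans (dwb_le_pair (down_directed hr x) (down_sup hr ht x)) ?_
  rw [hr x, top_himp]
  exact iSup_le fun d => le_trans (le_of_eq (inf_comm _ _)) (ht z d x)

lemma dwb_lower (ht : ∀ x y z, e x y ⊓ e y z ≤ e x z) (a b x : P) :
    e a b ⊓ dwb e x b ≤ dwb e x a := by
  refine le_dwb fun D s hD hs => ?_
  rw [le_himp_iff]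
  have h1 : e a b ⊓ dwb e x b ⊓ e x s ≤ e a b ⊓ ⨆ d, D d ⊓ e b d := by
    rw [inf_assoc]
    exact inf_le_inf_left _ (le_himp_iff.mp (dwb_le_pair hD hs))
  refine h1.trans ?_
  rw [inf_iSup_eq]
  refine iSup_le fun d => le_trans ?_ (le_iSup _ d)
  refine le_inf (le_trans inf_le_right inf_le_left) ?_
  exact (inf_le_inf_left _ inf_le_right).trans (ht a b d)

lemma dwb_upper (ht : ∀ x y z, e x y ⊓ e y z ≤ e x z) (x y z : P) :
    dwb e y x ⊓ e y z ≤ dwb e z x := by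
  refine le_dwb fun D s hD hs => ?_
  rw [le_himp_iff]
  have h3 : dwb e y x ⊓ e y z ⊓ e z s ≤ dwb e y x ⊓ e y s := by
    rw [inf_assoc]; exact inf_le_inf_left _ (ht y z s)
  exact h3.trans (le_himp_iff.mp (dwb_le_pair hD hs))

lemma E_directed (he : IsContinuousLOrder e) {D : P → L} {s : P}
    (hD : IsDirectedL e D) (hs : IsSupOf e D s) :
    IsDirectedL e (fun d => ⨆ y, D y ⊓ dwb e y d) := by
  have ht := he.1.2.1
  have hc := he.2
  constructor
  · have hy : ∀ y : P, (⨆ d, D y ⊓ dwb e y d) = D y := fun y => by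
      rw [← inf_iSup_eq, (hc y).1.1, inf_top_eq]
    rw [iSup_comm]
    simp only [hy]
    exact hD.1
  · intro a b
    rw [iSup_inf_eq]
    refine iSup_le fun y => ?_
    rw [inf_iSup_eq]
    refine iSup_le fun y' => ?_
    have step1 : (D y ⊓ dwb e y a) ⊓ (D y' ⊓ dwb e y' b)
        ≤ (D y ⊓ D y') ⊓ (dwb e y a ⊓ dwb e y' b) := by
      refine le_inf (le_inf ?_ ?_) (le_inf ?_ ?_)
      · exact inf_le_left.trans inf_le_left
      · exact inf_le_right.trans inf_le_left
      · exact inf_le_left.trans inf_le_right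
      · exact inf_le_right.trans inf_le_right
    refine step1.trans ?_
    refine (inf_le_inf_right _ (hD.2 y y')).trans ?_
    rw [iSup_inf_eq]
    refine iSup_le fun w => ?_
    have step2 : (D w ⊓ e y w ⊓ e y' w) ⊓ (dwb e y a ⊓ dwb e y' b)
        ≤ D w ⊓ (dwb e w a ⊓ dwb e w b) := by
      refine le_inf (inf_le_left.trans (inf_le_left.trans inf_le_left)) (le_inf ?_ ?_)
      · have h : (D w ⊓ e y w ⊓ e y' w) ⊓ (dwb e y a ⊓ dwb e y' b)
            ≤ dwb e y a ⊓ e y w := le_inf (inf_le_right.trans inf_le_left)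
              (inf_le_left.trans (inf_le_left.trans inf_le_right))
        exact h.trans (dwb_upper ht a y w)
      · have h : (D w ⊓ e y w ⊓ e y' w) ⊓ (dwb e y a ⊓ dwb e y' b)
            ≤ dwb e y' b ⊓ e y' w := le_inf (inf_le_right.trans inf_le_right)
              (inf_le_left.trans inf_le_right)
        exact h.trans (dwb_upper ht b y' w)
    refine step2.trans ?_
    refine (inf_le_inf_left _ ((hc w).1.2 a b)).trans ?_
    rw [inf_iSup_eq]
    refine iSup_le fun z => le_trans ?_ (le_iSup _ z)
    refine le_inf (le_inf ?_ ?_) ?_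
    · exact le_trans (le_inf inf_le_left
        (inf_le_right.trans (inf_le_left.trans inf_le_left)))
        (le_iSup (fun y => D y ⊓ dwb e y z) w)
    · exact inf_le_right.trans (inf_le_left.trans inf_le_right)
    · exact inf_le_right.trans inf_le_right

lemma E_sup (he : IsContinuousLOrder e) {D : P → L} {s : P}
    (hD : IsDirectedL e D) (hs : IsSupOf e D s) :
    IsSupOf e (fun d => ⨆ y, D y ⊓ dwb e y d) s := by
  have hr := he.1.1
  have ht := he.1.2.1
  have hc := he.2
  intro t
  apply le_antisymm
  · refine le_iInf fun z => le_himp_iff.mpr ?_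
    rw [inf_iSup_eq]
    refine iSup_le fun y => ?_
    have h1 : e s t ⊓ (D y ⊓ dwb e y z) ≤ (e z y ⊓ e y s) ⊓ e s t := by
      refine le_inf (le_inf ?_ ?_) inf_le_left
      · exact inf_le_right.trans (inf_le_right.trans (dwb_le_e hr ht y z))
      · exact inf_le_right.trans (inf_le_left.trans (mem_le_sup hr hs y))
    exact h1.trans ((inf_le_inf_right _ (ht z y s)).trans (ht z s t))
  · rw [hs t]
    refine le_iInf fun y => le_himp_iff.mpr ?_
    rw [(hc y).2 t]
    refine le_iInf fun z => le_himp_iff.mpr ?_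
    have h1 : (⨅ w, (⨆ y', D y' ⊓ dwb e y' w) ⇨ e w t) ⊓ D y ⊓ dwb e y z
        ≤ ((⨆ y', D y' ⊓ dwb e y' z) ⇨ e z t) ⊓ (⨆ y', D y' ⊓ dwb e y' z) := by
      refine le_inf (inf_le_left.trans (inf_le_left.trans (iInf_le _ z))) ?_
      exact le_trans (le_inf (inf_le_left.trans inf_le_right) inf_le_right)
        (le_iSup (fun y' => D y' ⊓ dwb e y' z) y)
    exact h1.trans himp_inf_le

lemma up_scottOpen (he : IsContinuousLOrder e) (x : P) :
    IsScottOpen e (fun y => dwb e y x) := by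
  have hr := he.1.1
  have ht := he.1.2.1
  constructor
  · intro y z
    exact dwb_upper ht x y z
  · intro D s hD hs
    apply le_antisymm
    · refine (dwb_le_pair (E_directed he hD hs) (E_sup he hD hs)).trans ?_
      rw [hr s, top_himp]
      refine iSup_le fun d => ?_
      rw [iSup_inf_eq]
      refine iSup_le fun y => le_trans ?_ (le_iSup (fun y => dwb e y x ⊓ D y) y)
      refine le_inf ?_ (inf_le_left.trans inf_le_left)
      have h : (D y ⊓ dwb e y d) ⊓ e x d ≤ e x d ⊓ dwb e y d :=
        le_inf inf_le_right (inf_le_left.trans inf_le_right)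
      exact h.trans (dwb_lower ht x d y)
    · refine iSup_le fun y => ?_
      exact (inf_le_inf_left _ (mem_le_sup hr hs y)).trans (dwb_upper ht x y s)

end Stmt8Aux

/-- Every Scott open set U = ⨆_x U(x) ⊓ ⇑x; hence {⇑x} is a base of σ_L(P). -/
theorem stmt8 {P : Type*} (e : P → P → L) (he : IsContinuousLOrder e) :
    (∀ U ∈ scottOpens e, U = fun y => ⨆ x, U x ⊓ dwb e y x) ∧
    IsBase (scottOpens e) {B | ∃ x : P, B = fun y => dwb e y x} := by
  have hr := he.1.1
  have ht := he.1.2.1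
  have part1 : ∀ U ∈ scottOpens e, U = fun y => ⨆ x, U x ⊓ dwb e y x := by
    intro U hU
    funext y
    exact hU.2 (dwb e y) y (he.2 y).1 (he.2 y).2
  refine ⟨part1, ?_, ?_⟩
  · rintro B ⟨x, rfl⟩
    exact up_scottOpen he x
  · intro U hU
    funext y
    apply le_antisymm
    · have hy : U y = ⨆ x, U x ⊓ dwb e y x := by
        conv_lhs => rw [part1 U hU]
      rw [hy]
      refine iSup_le fun x => ?_
      refine le_trans ?_
        (le_iSup₂ (f := fun (B : P → L) (_ : B ∈ {B | ∃ x : P, B = fun y => dwb e y x}) =>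
          subF B U ⊓ B y) (fun z => dwb e z x) ⟨x, rfl⟩)
      refine inf_le_inf_right _ ?_
      refine le_iInf fun z => le_himp_iff.mpr ?_
      exact (inf_le_inf_left _ (dwb_le_e hr ht z x)).trans (hU.1 x z)
    · refine iSup₂_le fun B hB => ?_
      obtain ⟨x, rfl⟩ := hB
      exact le_trans (inf_le_inf_right _ (iInf_le _ y)) himp_inf_le


end FuzzyPaper
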